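/- Let μ ∈ ℝ, and suppose the linear map w ↦ (Bw, Dw) from ℝ^m to ℝ^n × ℝ^p is injective. Let q ∈ ℕ and let V (an n×q real matrix) and W (an m×q real matrix) be such that the columns of the stacked (n+m)×q matrix [V; W] form a basis of the null space of the Rosenbrock matrix P(μ). Then V has linearly independent columns (rank V = q), and the column space of V equals the subspace R⋆(μ). -/

import Mathlib

/-- The Rosenbrock matrix `P(μ) = [[A-μI, B],[C, D]]` acting as a linear map
`(v,w) ↦ ((A-μI)v + Bw, Cv + Dw)`. -/
def rosenbrockMap {n m p : ℕ} (A : Matrix (Fin n) (Fin n) ℝ) (B : Matrix (Fin n) (Fin m) ℝ)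
    (C : Matrix (Fin p) (Fin n) ℝ) (D : Matrix (Fin p) (Fin m) ℝ) (μ : ℝ) :
    ((Fin n → ℝ) × (Fin m → ℝ)) →ₗ[ℝ] ((Fin n → ℝ) × (Fin p → ℝ)) :=
  LinearMap.prod
    (((A - μ • 1).mulVecLin).comp (LinearMap.fst ℝ (Fin n → ℝ) (Fin m → ℝ)) +
      (B.mulVecLin).comp (LinearMap.snd ℝ (Fin n → ℝ) (Fin m → ℝ)))
    ((C.mulVecLin).comp (LinearMap.fst ℝ (Fin n → ℝ) (Fin m → ℝ)) +
      (D.mulVecLin).comp (LinearMap.snd ℝ (Fin n → ℝ) (Fin m → ℝ)))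

/-- `R⋆(μ)` as a set. -/
def RstarSet {n m p : ℕ} (A : Matrix (Fin n) (Fin n) ℝ) (B : Matrix (Fin n) (Fin m) ℝ)
    (C : Matrix (Fin p) (Fin n) ℝ) (D : Matrix (Fin p) (Fin m) ℝ) (μ : ℝ) :
    Set (Fin n → ℝ) :=
  {v | ∃ w : Fin m → ℝ, (A - μ • 1).mulVec v + B.mulVec w = 0 ∧ C.mulVec v + D.mulVec w = 0}

/-- Corollary 1 (proof content): if the columns of the stacked matrix `[V; W]` form a basis of
the null space of the Rosenbrock matrix `P(μ)` and `[B; D]` has full column rank, then `V` has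
linearly independent columns and the column space of `V` is exactly `R⋆(μ)`. -/
theorem upper_block_of_kernel_basis_is_basis_of_Rstar
    (n m p q : ℕ) (hn : 0 < n) (hm : 0 < m) (hp : 0 < p)
    (A : Matrix (Fin n) (Fin n) ℝ) (B : Matrix (Fin n) (Fin m) ℝ)
    (C : Matrix (Fin p) (Fin n) ℝ) (D : Matrix (Fin p) (Fin m) ℝ) (μ : ℝ)
    (hinj : Function.Injective fun w : Fin m → ℝ => (B.mulVec w, D.mulVec w))
    (V : Matrix (Fin n) (Fin q) ℝ) (W : Matrix (Fin m) (Fin q) ℝ)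
    (hli : LinearIndependent ℝ
      (fun c : Fin q => ((fun i => V i c, fun i => W i c) : (Fin n → ℝ) × (Fin m → ℝ))))
    (hspan : Submodule.span ℝ (Set.range
        (fun c : Fin q => ((fun i => V i c, fun i => W i c) : (Fin n → ℝ) × (Fin m → ℝ)))) =
      LinearMap.ker (rosenbrockMap A B C D μ)) :
    LinearIndependent ℝ (fun c : Fin q => (fun i => V i c : Fin n → ℝ)) ∧
      (Submodule.span ℝ (Set.range (fun c : Fin q => (fun i => V i c : Fin n → ℝ))) :
        Set (Fin n → ℝ)) = RstarSet A B C D μ := by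

  classical
  set f := LinearMap.fst ℝ (Fin n → ℝ) (Fin m → ℝ) with hf
  set cols := (fun c : Fin q => ((fun i => V i c, fun i => W i c) :
      (Fin n → ℝ) × (Fin m → ℝ))) with hcols
  have hker0 : ∀ x : (Fin n → ℝ) × (Fin m → ℝ),
      x ∈ LinearMap.ker (rosenbrockMap A B C D μ) → x.1 = 0 → x = 0 := by
    rintro ⟨v, w⟩ hx hv
    simp only at hv
    subst hv
    have := hx
    simp only [LinearMap.mem_ker, rosenbrockMap, LinearMap.prod_apply, LinearMap.add_apply,
      LinearMap.comp_apply, LinearMap.fst_apply, LinearMap.snd_apply, Matrix.mulVecLin_apply,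
      Matrix.mulVec_zero, zero_add, Prod.mk_eq_zero, Function.prod] at this
    have hw : w = 0 := by
      have := hinj (a₁ := w) (a₂ := 0) (by simp [this.1, this.2])
      exact this
    simp [hw]
  have hdisj : Disjoint (Submodule.span ℝ (Set.range cols)) (LinearMap.ker f) := by
    rw [hspan]
    rw [Submodule.disjoint_def]
    intro x hx hx'
    exact hker0 x hx (by simpa [hf] using hx')
  have hli2 : LinearIndependent ℝ (f ∘ cols) := hli.map hdisj
  have hcomp : (fun c : Fin q => (fun i => V i c : Fin n → ℝ)) = f ∘ cols := rfl
  constructor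
  · rw [hcomp]; exact hli2
  · rw [hcomp]
    have : Submodule.span ℝ (Set.range (f ∘ cols)) =
        Submodule.map f (LinearMap.ker (rosenbrockMap A B C D μ)) := by
      rw [Set.range_comp, ← Submodule.map_span, hspan]
    rw [this]
    ext v
    simp only [Submodule.map_coe, Set.mem_image, SetLike.mem_coe, LinearMap.mem_ker, RstarSet,
      Set.mem_setOf_eq]
    constructor
    · rintro ⟨⟨v', w⟩, hx, hv⟩
      simp only [hf, LinearMap.fst_apply] at hv
      subst hv
      have h := hx
      simp only [rosenbrockMap, Prod.ext_iff, Function.prod, LinearMap.prod_apply, LinearMap.add_apply,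
        LinearMap.comp_apply, LinearMap.fst_apply, LinearMap.snd_apply, Matrix.mulVecLin_apply,
        Prod.mk_eq_zero] at h
      exact ⟨w, h.1, h.2⟩
    · rintro ⟨w, h1, h2⟩
      exact ⟨(v, w), by simp [rosenbrockMap, Prod.ext_iff, Function.prod, h1, h2]; simpa [Matrix.sub_mulVec, Matrix.smul_mulVec, Matrix.one_mulVec] using h1, rfl⟩
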